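/- arXiv:2202.02224 — 2 statements merged into one kernel-verified Lean document; each statement's English description precedes it below -/
import Mathlib

section
/- Let K be a real symmetric 3×3 matrix with pairwise distinct positive eigenvalues λ₁, λ₂, λ₃. Then for every c < 2·min{λ₁+λ₂, λ₁+λ₃, λ₂+λ₃} there exists a constant γ > 0 such that for every Q ∈ SO(3) with tr(K (I₃ − Q)) ≤ c, one has tr(K (I₃ − Q)) ≤ γ ‖K Q − Qᵀ K‖_F², where ‖·‖_F denotes the Frobenius norm. -/
open Matrix

/-- The squared Frobenius norm `‖M‖_F² = ∑ i j, (M i j)²`. -/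
def frobSq (M : Matrix (Fin 3) (Fin 3) ℝ) : ℝ := ∑ i, ∑ j, (M i j) ^ 2

section aux

lemma adj_cayley' (M : Matrix (Fin 3) (Fin 3) ℝ) :
    M.adjugate = M*M - M.trace • M + (M.adjugate).trace • 1 := by
  ext i j
  fin_cases i <;> fin_cases j <;>
    simp [Matrix.adjugate_fin_three, Matrix.mul_apply, Matrix.trace, Matrix.diag,
      Fin.sum_univ_three, Matrix.one_apply] <;> ring

lemma adj_eq_transpose' (Q : Matrix (Fin 3) (Fin 3) ℝ) (hQ : Qᵀ * Q = 1) (hdet : Q.det = 1) :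
    Q.adjugate = Qᵀ := by
  calc Q.adjugate = 1 * Q.adjugate := (one_mul _).symm
    _ = Qᵀ * Q * Q.adjugate := by rw [hQ]
    _ = Qᵀ * (Q * Q.adjugate) := by rw [Matrix.mul_assoc]
    _ = Qᵀ := by rw [Matrix.mul_adjugate, hdet, one_smul, mul_one]

lemma Qsq' (Q : Matrix (Fin 3) (Fin 3) ℝ) (hQ : Qᵀ * Q = 1) (hdet : Q.det = 1) :
    Q*Q = Q.trace • Q - Q.trace • 1 + Qᵀ := by
  have h := adj_cayley' Q
  rw [adj_eq_transpose' Q hQ hdet, Matrix.trace_transpose] at h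
  linear_combination (norm := abel) -h

lemma trace_transpose_mul' (A B : Matrix (Fin 3) (Fin 3) ℝ) :
    (Aᵀ * B).trace = ∑ i, ∑ j, A i j * B i j := by
  simp [Matrix.trace, Matrix.mul_apply, Matrix.diag]
  rw [Finset.sum_comm]

lemma frobSq_eq_trace (M : Matrix (Fin 3) (Fin 3) ℝ) : frobSq M = (Mᵀ * M).trace := by
  rw [trace_transpose_mul']
  simp [frobSq, pow_two]

lemma cs_frob' (A B : Matrix (Fin 3) (Fin 3) ℝ) :
    (∑ i, ∑ j, A i j * B i j)^2 ≤ frobSq A * frobSq B := by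
  have h1 : (∑ i, ∑ j, A i j * B i j) = ∑ p : Fin 3 × Fin 3, A p.1 p.2 * B p.1 p.2 := by
    rw [Fintype.sum_prod_type]
  have h2 : frobSq A = ∑ p : Fin 3 × Fin 3, (A p.1 p.2)^2 := by
    rw [frobSq, Fintype.sum_prod_type]
  have h3 : frobSq B = ∑ p : Fin 3 × Fin 3, (B p.1 p.2)^2 := by
    rw [frobSq, Fintype.sum_prod_type]
  rw [h1, h2, h3]
  exact Finset.sum_mul_sq_le_sq_mul_sq _ _ _

lemma frobSq_nonneg' (A : Matrix (Fin 3) (Fin 3) ℝ) : 0 ≤ frobSq A := by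
  apply Finset.sum_nonneg; intro i _; apply Finset.sum_nonneg; intro j _; positivity

lemma identB' (K Q : Matrix (Fin 3) (Fin 3) ℝ) (hKt : Kᵀ = K)
    (hQ : Qᵀ * Q = 1) (hdet : Q.det = 1) :
    ((K*Q - Qᵀ*K)ᵀ * (Q - Qᵀ)).trace = 2*(1+Q.trace)*((K*(1-Q)).trace) := by
  have h1 : Q * Qᵀ = 1 := mul_eq_one_comm.mp hQ
  have h2 := Qsq' Q hQ hdet
  have hsymm : ∀ M : Matrix (Fin 3) (Fin 3) ℝ, (K * Mᵀ).trace = (K * M).trace := by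
    intro M
    calc (K * Mᵀ).trace = ((K * Mᵀ)ᵀ).trace := (Matrix.trace_transpose _).symm
      _ = (M * Kᵀ).trace := by rw [Matrix.transpose_mul, Matrix.transpose_transpose]
      _ = (K * M).trace := by rw [hKt, Matrix.trace_mul_comm]
  have expand : (K*Q - Qᵀ*K)ᵀ * (Q - Qᵀ)
      = Qᵀ*K*Q - Qᵀ*(K*Qᵀ) - K*(Q*Q) + K*(Q*Qᵀ) := by
    rw [Matrix.transpose_sub, Matrix.transpose_mul, Matrix.transpose_mul,
      Matrix.transpose_transpose, hKt]
    noncomm_ring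
  rw [expand]
  have e1 : (Qᵀ*K*Q).trace = K.trace := by
    rw [Matrix.trace_mul_comm, ← Matrix.mul_assoc, h1, one_mul]
  have e2 : (Qᵀ*(K*Qᵀ)).trace = (K*(Qᵀ*Qᵀ)).trace := by
    rw [Matrix.trace_mul_comm, Matrix.mul_assoc]
  have e3 : Qᵀ*Qᵀ = (Q*Q)ᵀ := by rw [Matrix.transpose_mul]
  have e4 : (K*(Q*Q)).trace = Q.trace * (K*Q).trace - Q.trace * K.trace + (K*Q).trace := by
    rw [h2]
    simp [Matrix.mul_add, Matrix.mul_sub, Matrix.trace_add, Matrix.trace_sub, hsymm Q]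
  simp only [Matrix.trace_sub, Matrix.trace_add, e1, e2, e3, hsymm (Q*Q), e4, h1,
    Matrix.mul_one, Matrix.mul_sub, Matrix.trace_sub]
  ring

lemma identW' (Q : Matrix (Fin 3) (Fin 3) ℝ) (hQ : Qᵀ * Q = 1) (hdet : Q.det = 1) :
    ((Q - Qᵀ)ᵀ * (Q - Qᵀ)).trace = 2*(1+Q.trace)*(3-Q.trace) := by
  have h1 : Q * Qᵀ = 1 := mul_eq_one_comm.mp hQ
  have h2 := Qsq' Q hQ hdet
  have expand : (Q - Qᵀ)ᵀ * (Q - Qᵀ) = Qᵀ*Q - Qᵀ*Qᵀ - Q*Q + Q*Qᵀ := by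
    rw [Matrix.transpose_sub, Matrix.transpose_transpose]
    noncomm_ring
  have htrQQ : (Q*Q).trace = Q.trace * Q.trace - 3 * Q.trace + Q.trace := by
    rw [h2]; simp [Matrix.trace_smul, Matrix.trace_one]; ring
  have h3 : (Qᵀ*Qᵀ).trace = (Q*Q).trace := by
    rw [← Matrix.transpose_mul, Matrix.trace_transpose]
  rw [expand]
  simp only [Matrix.trace_sub, Matrix.trace_add, hQ, h1, h3, htrQQ, Matrix.trace_one]
  norm_num [Fintype.card_fin]
  ring

lemma tri_aux' (A B C P R S T : ℝ)
    (hi : A*A + R*R + S*S = 1) (hj : P*P + B*B + T*T = 1)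
    (hij : A*P + R*B + S*T = 0) (hcof : A*B - P*R = C) :
    A + B ≤ 1 + C := by
  have key : (2-2*A)*(2-2*B) - (P+R)^2
      = ((-R)*(-T) - (-S)*(1-B))^2 + ((-S)*(-P) - (1-A)*(-T))^2
        + ((1-A)*(1-B) - (-R)*(-P))^2 := by
    linear_combination (-(2-2*B))*hi + (-((1-A)^2+R^2+S^2))*hj
      + (((1-A)*(-P)+(-R)*(1-B)+(-S)*(-T)) - (P+R))*hij
  have e : 1 + C - A - B = ((2-2*A)*(2-2*B) - (P+R)^2)/4 + (P-R)^2/4 := by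
    linear_combination -hcof
  nlinarith [sq_nonneg (P-R), sq_nonneg ((-R)*(-T) - (-S)*(1-B)),
    sq_nonneg ((-S)*(-P) - (1-A)*(-T)), sq_nonneg ((1-A)*(1-B) - (-R)*(-P))]

lemma cofac_ineq' (Q : Matrix (Fin 3) (Fin 3) ℝ) (hQ : Qᵀ * Q = 1) (hdet : Q.det = 1) :
    (Q 0 0 ≤ 1 ∧ Q 1 1 ≤ 1 ∧ Q 2 2 ≤ 1) ∧
    (Q 0 0 + Q 1 1 ≤ 1 + Q 2 2 ∧ Q 0 0 + Q 2 2 ≤ 1 + Q 1 1 ∧ Q 1 1 + Q 2 2 ≤ 1 + Q 0 0) := by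
  have hadj := adj_eq_transpose' Q hQ hdet
  have h00 := congrFun (congrFun hQ 0) 0
  have h11 := congrFun (congrFun hQ 1) 1
  have h22 := congrFun (congrFun hQ 2) 2
  have h01 := congrFun (congrFun hQ 0) 1
  have h02 := congrFun (congrFun hQ 0) 2
  have h12 := congrFun (congrFun hQ 1) 2
  simp [Matrix.mul_apply, Fin.sum_univ_three, Matrix.one_apply] at h00 h11 h22 h01 h02 h12
  have hc22 := congrFun (congrFun hadj 2) 2
  have hc11 := congrFun (congrFun hadj 1) 1
  have hc00 := congrFun (congrFun hadj 0) 0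
  simp [Matrix.adjugate_fin_three] at hc22 hc11 hc00
  refine ⟨⟨by nlinarith [sq_nonneg (Q 0 0 - 1), sq_nonneg (Q 0 0 + 1)],
      by nlinarith [sq_nonneg (Q 1 1 - 1), sq_nonneg (Q 1 1 + 1)],
      by nlinarith [sq_nonneg (Q 2 2 - 1), sq_nonneg (Q 2 2 + 1)]⟩, ?_, ?_, ?_⟩
  · exact tri_aux' (Q 0 0) (Q 1 1) (Q 2 2) (Q 0 1) (Q 1 0) (Q 2 0) (Q 2 1)
      (by linear_combination h00) (by linear_combination h11)
      (by linear_combination h01) (by linear_combination hc22)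
  · exact tri_aux' (Q 0 0) (Q 2 2) (Q 1 1) (Q 0 2) (Q 2 0) (Q 1 0) (Q 1 2)
      (by linear_combination h00) (by linear_combination h22)
      (by linear_combination h02) (by linear_combination hc11)
  · exact tri_aux' (Q 1 1) (Q 2 2) (Q 0 0) (Q 1 2) (Q 2 1) (Q 0 1) (Q 0 2)
      (by linear_combination h11) (by linear_combination h22)
      (by linear_combination h12) (by linear_combination hc00)

lemma convexC' (l0 l1 l2 m a0 a1 a2 : ℝ) (h01 : m ≤ l0+l1) (h02 : m ≤ l0+l2) (h12 : m ≤ l1+l2)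
    (t0 : a0 ≤ a1+a2) (t1 : a1 ≤ a0+a2) (t2 : a2 ≤ a0+a1) :
    m/2*(a0+a1+a2) ≤ l0*a0+l1*a1+l2*a2 := by
  nlinarith [mul_nonneg (by linarith : (0:ℝ) ≤ a1+a2-a0) (by linarith : (0:ℝ) ≤ l1+l2-m),
    mul_nonneg (by linarith : (0:ℝ) ≤ a0+a2-a1) (by linarith : (0:ℝ) ≤ l0+l2-m),
    mul_nonneg (by linarith : (0:ℝ) ≤ a0+a1-a2) (by linarith : (0:ℝ) ≤ l0+l1-m)]

end aux

/-- If the symmetric matrix `K` has pairwise distinct positive eigenvalues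
`λ₁, λ₂, λ₃`, then for every `c < 2 min{λ₁+λ₂, λ₁+λ₃, λ₂+λ₃}` there is `γ > 0` such that
`tr(K(I₃ − Q)) ≤ γ ‖K Q − Qᵀ K‖_F²` for every `Q ∈ SO(3)` with `tr(K(I₃ − Q)) ≤ c`. -/
theorem error_vector_upper_bound
    (K : Matrix (Fin 3) (Fin 3) ℝ) (hK : K.IsHermitian)
    (hpos : ∀ i, 0 < hK.eigenvalues i)
    (hdist : Function.Injective hK.eigenvalues) :
    ∀ c : ℝ,
      c < 2 * min (hK.eigenvalues 0 + hK.eigenvalues 1)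
            (min (hK.eigenvalues 0 + hK.eigenvalues 2)
              (hK.eigenvalues 1 + hK.eigenvalues 2)) →
      ∃ γ : ℝ, 0 < γ ∧
        ∀ Q : Matrix (Fin 3) (Fin 3) ℝ, Qᵀ * Q = 1 → Q.det = 1 →
          (K * (1 - Q)).trace ≤ c →
          (K * (1 - Q)).trace ≤ γ * frobSq (K * Q - Qᵀ * K) := by
  intro c hc
  set l := hK.eigenvalues with hl
  set m : ℝ := min (l 0 + l 1) (min (l 0 + l 2) (l 1 + l 2)) with hmdef
  have hm : 0 < m := by
    have h0 := hpos 0; have h1 := hpos 1; have h2 := hpos 2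
    simp only [hmdef, lt_min_iff]
    exact ⟨by linarith, by linarith, by linarith⟩
  have hm01 : m ≤ l 0 + l 1 := min_le_left _ _
  have hm02 : m ≤ l 0 + l 2 := le_trans (min_le_right _ _) (min_le_left _ _)
  have hm12 : m ≤ l 1 + l 2 := le_trans (min_le_right _ _) (min_le_right _ _)
  -- spectral decomposition
  obtain ⟨U, hU1, hU2, hKU⟩ :
      ∃ U : Matrix (Fin 3) (Fin 3) ℝ, Uᵀ * U = 1 ∧ U * Uᵀ = 1 ∧
        K = U * diagonal l * Uᵀ := by
    refine ⟨hK.eigenvectorUnitary, ?_, ?_, ?_⟩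
    · simpa [Matrix.star_eq_conjTranspose, Matrix.conjTranspose_eq_transpose_of_trivial]
        using (hK.eigenvectorUnitary).2.1
    · simpa [Matrix.star_eq_conjTranspose, Matrix.conjTranspose_eq_transpose_of_trivial]
        using (hK.eigenvectorUnitary).2.2
    · simpa [Matrix.star_eq_conjTranspose, Matrix.conjTranspose_eq_transpose_of_trivial]
        using hK.spectral_theorem
  have hKt : Kᵀ = K := by
    have h := hK
    rw [Matrix.IsHermitian] at h
    rwa [Matrix.conjTranspose_eq_transpose_of_trivial] at h
  -- choose gamma
  set cp : ℝ := max c 0 with hcp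
  have hcpm : cp < 2*m := by
    rw [hcp, max_lt_iff]; exact ⟨hc, by linarith⟩
  set σ : ℝ := 1 - cp/(2*m) with hσdef
  have hσ : 0 < σ := by
    rw [hσdef, sub_pos, div_lt_one (by linarith : (0:ℝ) < 2*m)]
    exact hcpm
  have hx : (0:ℝ) < 4*m*σ := mul_pos (mul_pos (by norm_num) hm) hσ
  refine ⟨1/(4*m*σ), one_div_pos.mpr hx, ?_⟩
  intro Q hQ hdet hΦc
  set Φ : ℝ := (K * (1 - Q)).trace with hΦdef
  set t : ℝ := Q.trace with htdef
  -- conjugated rotation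
  set Q' : Matrix (Fin 3) (Fin 3) ℝ := Uᵀ * Q * U with hQ'def
  have hQ'orth : Q'ᵀ * Q' = 1 := by
    rw [hQ'def]
    have htp : (Uᵀ * Q * U)ᵀ = Uᵀ * (Qᵀ * U) := by
      simp [Matrix.transpose_mul, Matrix.mul_assoc]
    rw [htp]
    calc Uᵀ * (Qᵀ * U) * (Uᵀ * Q * U)
        = Uᵀ * (Qᵀ * ((U * Uᵀ) * (Q * U))) := by simp only [Matrix.mul_assoc]
      _ = Uᵀ * (Qᵀ * (Q * U)) := by rw [hU2, one_mul]
      _ = Uᵀ * ((Qᵀ * Q) * U) := by simp only [Matrix.mul_assoc]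
      _ = Uᵀ * U := by rw [hQ, one_mul]
      _ = 1 := hU1
  have hQ'det : Q'.det = 1 := by
    have hUU : U.det * U.det = 1 := by
      have h := congrArg Matrix.det hU1
      rwa [Matrix.det_mul, Matrix.det_transpose, Matrix.det_one] at h
    rw [hQ'def, Matrix.det_mul, Matrix.det_mul, hdet, mul_one, Matrix.det_transpose]
    exact hUU
  have hQ'tr : Q' 0 0 + Q' 1 1 + Q' 2 2 = t := by
    have h : Q'.trace = Q.trace := by
      rw [hQ'def, Matrix.trace_mul_comm, ← Matrix.mul_assoc, hU2, one_mul]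
    rw [htdef, ← h]
    simp [Matrix.trace, Matrix.diag, Fin.sum_univ_three]
  -- Φ in eigen-coordinates
  have hΦeig : Φ = l 0 * (1 - Q' 0 0) + l 1 * (1 - Q' 1 1) + l 2 * (1 - Q' 2 2) := by
    have step : K * (1 - Q) = U * (diagonal l * (Uᵀ * (1 - Q))) := by
      rw [hKU]; simp only [Matrix.mul_assoc]
    have : Φ = (diagonal l * (Uᵀ * (1 - Q) * U)).trace := by
      rw [hΦdef, step, Matrix.trace_mul_comm]
      simp only [Matrix.mul_assoc]
    rw [this]
    have hexp : Uᵀ * (1 - Q) * U = 1 - Q' := by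
      rw [Matrix.mul_sub, Matrix.sub_mul, Matrix.mul_one, hU1, hQ'def]
    rw [hexp]
    simp [Matrix.trace, Matrix.diag, Matrix.mul_apply, Matrix.diagonal, Fin.sum_univ_three,
      Matrix.one_apply, Matrix.sub_apply]
  obtain ⟨⟨hd0, hd1, hd2⟩, htr0, htr1, htr2⟩ := cofac_ineq' Q' hQ'orth hQ'det
  -- lower bound on Φ
  have hC : m/2 * (3 - t) ≤ Φ := by
    have := convexC' (l 0) (l 1) (l 2) m (1 - Q' 0 0) (1 - Q' 1 1) (1 - Q' 2 2)
      hm01 hm02 hm12 (by linarith) (by linarith) (by linarith)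
    rw [hΦeig]; rw [← hQ'tr]; linarith
  have h3t : 0 ≤ 3 - t := by rw [← hQ'tr]; linarith
  -- main inequalities
  have hS : ∑ i, ∑ j, (K * Q - Qᵀ * K) i j * (Q - Qᵀ) i j = 2*(1+t)*Φ := by
    rw [← trace_transpose_mul', htdef, hΦdef]
    exact identB' K Q hKt hQ hdet
  have hWF : frobSq (Q - Qᵀ) = 2*(1+t)*(3-t) := by
    rw [frobSq_eq_trace, htdef]
    exact identW' Q hQ hdet
  have hCS : (2*(1+t)*Φ)^2 ≤ frobSq (K * Q - Qᵀ * K) * (2*(1+t)*(3-t)) := by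
    rw [← hS, ← hWF]; exact cs_frob' _ _
  have hF : 0 ≤ frobSq (K * Q - Qᵀ * K) := frobSq_nonneg' _
  -- finish
  rcases le_or_gt Φ 0 with hΦ0 | hΦ0
  · have : 0 ≤ 1/(4*m*σ) * frobSq (K * Q - Qᵀ * K) :=
      mul_nonneg (le_of_lt (one_div_pos.mpr hx)) hF
    linarith
  · have hcpos : 0 < c := lt_of_lt_of_le hΦ0 hΦc
    have hcpc : cp = c := max_eq_left (le_of_lt hcpos)
    have hmt : m * (3 - t) ≤ 2*Φ := by linarith
    have hm' : m ≠ 0 := ne_of_gt hm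
    have h1t : 4*m*σ ≤ m*(1+t) := by
      have hms : m * σ * 4 = 4*m - 2*cp := by
        rw [hσdef]; field_simp; ring
      have h2 : m*(1+t) = 4*m - m*(3-t) := by ring
      rw [h2]
      have hmc : m*(3-t) ≤ 2*cp := by rw [hcpc]; linarith
      linarith [hms, hmc]
    have h1tpos : 0 < 1 + t := by
      have hmt' : 0 < m*(1+t) := lt_of_lt_of_le hx h1t
      nlinarith [hmt', hm]
    have hmain : m * (1+t) * Φ ≤ frobSq (K * Q - Qᵀ * K) := by
      -- 4(1+t)²Φ² ≤ 2F(1+t)(3−t) and m(3−t) ≤ 2Φ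
      have step1 : m * (2*(1+t)*Φ)^2 ≤ frobSq (K * Q - Qᵀ * K) * (2*(1+t)) * (m * (3-t)) := by
        calc m * (2*(1+t)*Φ)^2 ≤ m * (frobSq (K * Q - Qᵀ * K) * (2*(1+t)*(3-t))) :=
              by apply mul_le_mul_of_nonneg_left hCS (le_of_lt hm)
          _ = frobSq (K * Q - Qᵀ * K) * (2*(1+t)) * (m * (3-t)) := by ring
      have step2 : frobSq (K * Q - Qᵀ * K) * (2*(1+t)) * (m * (3-t)) ≤ frobSq (K * Q - Qᵀ * K) * (2*(1+t)) * (2*Φ) := by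
        apply mul_le_mul_of_nonneg_left hmt
        exact mul_nonneg hF (by linarith)
      have step3 : m * (2*(1+t)*Φ)^2 ≤ frobSq (K * Q - Qᵀ * K) * (2*(1+t)) * (2*Φ) := le_trans step1 step2
      -- divide by 4(1+t)Φ > 0
      have hpos4 : 0 < 4*(1+t)*Φ := mul_pos (by linarith) hΦ0
      have step4 : m * (1+t) * Φ * (4*(1+t)*Φ)
          ≤ frobSq (K * Q - Qᵀ * K) * (4*(1+t)*Φ) := by
        calc m * (1+t) * Φ * (4*(1+t)*Φ) = m * (2*(1+t)*Φ)^2 := by ring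
          _ ≤ frobSq (K * Q - Qᵀ * K) * (2*(1+t)) * (2*Φ) := step3
          _ = frobSq (K * Q - Qᵀ * K) * (4*(1+t)*Φ) := by ring
      exact le_of_mul_le_mul_right step4 hpos4
    have hfin : Φ * (4*m*σ) ≤ frobSq (K * Q - Qᵀ * K) := by
      calc Φ * (4*m*σ) ≤ Φ * (m*(1+t)) := by
            apply mul_le_mul_of_nonneg_left h1t (le_of_lt hΦ0)
        _ = m * (1+t) * Φ := by ring
        _ ≤ frobSq (K * Q - Qᵀ * K) := hmain
    have := (le_div_iff₀ hx).mpr hfin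
    have e : 1/(4*m*σ) * frobSq (K * Q - Qᵀ * K) = frobSq (K * Q - Qᵀ * K) / (4*m*σ) := by ring
    linarith
end

section
/- Let a₁, …, a_m ∈ ℝ³ be constant unit vectors, k₁, …, k_m > 0, k_ω > 0, k_V ≥ 0, let ω : ℝ → ℝ³, h : ℝ → ℝ³ and b₁, …, b_m : ℝ → ℝ³ be differentiable with ‖b_j(t)‖ = 1 for all t, and suppose the forced closed-loop dynamics b_j′(t) = b_j(t) × ω(t) and ω′(t) = −k_ω ω(t) − e(t) + h(t) hold, where e(t) = Σ_{j=1}^m k_j (a_j × b_j(t)). Define V(t) = Σ_{j=1}^m k_j (1 + a_j · b_j(t)) + ½‖ω(t)‖² + k_V (e(t) · ω(t)). Then V is differentiable and for all t, V′(t) ≤ −(k_ω − k_V Σ_{j=1}^m k_j) ‖ω(t)‖² − k_V ‖e(t)‖² + k_V k_ω ‖e(t)‖ ‖ω(t)‖ + (‖ω(t)‖ + k_V ‖e(t)‖) ‖h(t)‖. -/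
open Matrix

/-- The cross product on `ℝ³` with the Euclidean structure. -/
noncomputable def cross3 (x y : EuclideanSpace ℝ (Fin 3)) : EuclideanSpace ℝ (Fin 3) :=
  (WithLp.equiv 2 (Fin 3 → ℝ)).symm
    (crossProduct ((WithLp.equiv 2 (Fin 3 → ℝ)) x) ((WithLp.equiv 2 (Fin 3 → ℝ)) y))

lemma cross3_apply (x y : EuclideanSpace ℝ (Fin 3)) (i : Fin 3) :
    cross3 x y i = ![x 1 * y 2 - x 2 * y 1, x 2 * y 0 - x 0 * y 2, x 0 * y 1 - x 1 * y 0] i := by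
  simp [cross3, crossProduct]

lemma cross3_triple (x y z : EuclideanSpace ℝ (Fin 3)) :
    (inner ℝ x (cross3 y z) : ℝ) = inner ℝ (cross3 x y) z := by
  simp [PiLp.inner_apply, Fin.sum_univ_three, cross3_apply, RCLike.inner_apply]
  ring

lemma cross3_norm_le (x y : EuclideanSpace ℝ (Fin 3)) : ‖cross3 x y‖ ≤ ‖x‖ * ‖y‖ := by
  have h1 : ‖cross3 x y‖^2 ≤ (‖x‖*‖y‖)^2 := by
    rw [← real_inner_self_eq_norm_sq, mul_pow, ← real_inner_self_eq_norm_sq,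
      ← real_inner_self_eq_norm_sq]
    simp only [PiLp.inner_apply, Fin.sum_univ_three, cross3_apply, RCLike.inner_apply, conj_trivial]
    simp
    nlinarith [sq_nonneg (x 0 * y 0 + x 1 * y 1 + x 2 * y 2)]
  nlinarith [norm_nonneg (cross3 x y), mul_nonneg (norm_nonneg x) (norm_nonneg y)]

noncomputable def cross3CLM (c : EuclideanSpace ℝ (Fin 3)) :
    EuclideanSpace ℝ (Fin 3) →L[ℝ] EuclideanSpace ℝ (Fin 3) :=
  LinearMap.toContinuousLinearMap
    { toFun := fun x => cross3 c x
      map_add' := by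
        intro x y; ext i; fin_cases i <;>
          simp [cross3_apply, PiLp.add_apply] <;> ring
      map_smul' := by
        intro r x; ext i; fin_cases i <;>
          simp [cross3_apply, PiLp.smul_apply, smul_eq_mul] <;> ring }

lemma cross3CLM_apply (c x : EuclideanSpace ℝ (Fin 3)) : cross3CLM c x = cross3 c x := rfl

lemma HasDerivAt.cross3_const {f : ℝ → EuclideanSpace ℝ (Fin 3)} {f' : EuclideanSpace ℝ (Fin 3)}
    {t : ℝ} (c : EuclideanSpace ℝ (Fin 3)) (hf : HasDerivAt f f' t) :
    HasDerivAt (fun s => cross3 c (f s)) (cross3 c f') t := by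
  exact (cross3CLM c).hasFDerivAt.comp_hasDerivAt t hf

/-- Dissipation inequality for the forced closed-loop attitude dynamics
`b_j′ = b_j × ω`, `ω′ = −k_ω ω − e + h`, with `e = ∑ j, k j (a j × b j)` and
`V = ∑ j, k j (1 + a j · b j) + ½‖ω‖² + k_V (e · ω)`. -/
theorem lyapunov_dissipation_forced
    (m : ℕ) (a : Fin m → EuclideanSpace ℝ (Fin 3)) (ha : ∀ j, ‖a j‖ = 1)
    (k : Fin m → ℝ) (hk : ∀ j, 0 < k j)
    (kω kV : ℝ) (hkω : 0 < kω) (hkV : 0 ≤ kV)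
    (ω h : ℝ → EuclideanSpace ℝ (Fin 3))
    (b : Fin m → ℝ → EuclideanSpace ℝ (Fin 3))
    (hbunit : ∀ j t, ‖b j t‖ = 1)
    (e : ℝ → EuclideanSpace ℝ (Fin 3))
    (he : ∀ t, e t = ∑ j, k j • cross3 (a j) (b j t))
    (hb : ∀ j t, HasDerivAt (b j) (cross3 (b j t) (ω t)) t)
    (hω : ∀ t, HasDerivAt ω (-(kω • ω t) - e t + h t) t)
    (V : ℝ → ℝ)
    (hV : ∀ t, V t = ∑ j, k j * (1 + inner ℝ (a j) (b j t) : ℝ)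
        + 1 / 2 * ‖ω t‖ ^ 2 + kV * (inner ℝ (e t) (ω t) : ℝ)) :
    Differentiable ℝ V ∧
    ∀ t : ℝ, deriv V t ≤ -(kω - kV * ∑ j, k j) * ‖ω t‖ ^ 2
        - kV * ‖e t‖ ^ 2 + kV * kω * ‖e t‖ * ‖ω t‖
        + (‖ω t‖ + kV * ‖e t‖) * ‖h t‖ := by
  set E' : ℝ → EuclideanSpace ℝ (Fin 3) :=
    fun t => ∑ j, k j • cross3 (a j) (cross3 (b j t) (ω t)) with hE'def
  set ω' : ℝ → EuclideanSpace ℝ (Fin 3) :=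
    fun t => -(kω • ω t) - e t + h t with hω'def
  have hE : ∀ t, HasDerivAt e (E' t) t := by
    intro t
    have he' : e = fun s => ∑ j, k j • cross3 (a j) (b j s) := funext he
    rw [he']
    exact HasDerivAt.fun_sum fun j _ => ((hb j t).cross3_const (a j)).const_smul (k j)
  have hVd : ∀ t, HasDerivAt V
      ((inner ℝ (e t) (ω t) : ℝ) + (inner ℝ (ω t) (ω' t) : ℝ)
        + kV * ((inner ℝ (e t) (ω' t) : ℝ) + (inner ℝ (E' t) (ω t) : ℝ))) t := by
    intro t
    have hV' : V = fun s => (∑ j, k j * (1 + (inner ℝ (a j) (b j s) : ℝ)))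
        + 1 / 2 * (inner ℝ (ω s) (ω s) : ℝ) + kV * (inner ℝ (e s) (ω s) : ℝ) := by
      funext s; rw [hV s, real_inner_self_eq_norm_sq]
    rw [hV']
    have h1 : HasDerivAt (fun s => ∑ j, k j * (1 + (inner ℝ (a j) (b j s) : ℝ)))
        ((inner ℝ (e t) (ω t) : ℝ)) t := by
      have hsum : HasDerivAt (fun s => ∑ j, k j * (1 + (inner ℝ (a j) (b j s) : ℝ)))
          (∑ j, k j * ((0 : ℝ) + ((inner ℝ (a j) (cross3 (b j t) (ω t)) : ℝ)
            + (inner ℝ (0 : EuclideanSpace ℝ (Fin 3)) (b j t) : ℝ)))) t := by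
        refine HasDerivAt.fun_sum fun j _ => ?_
        exact ((hasDerivAt_const t (1:ℝ)).add
          (HasDerivAt.inner ℝ (hasDerivAt_const t (a j)) (hb j t))).const_mul (k j)
      simp only [inner_zero_left, add_zero, zero_add] at hsum
      have hee : (inner ℝ (e t) (ω t) : ℝ)
          = ∑ j, k j * (inner ℝ (a j) (cross3 (b j t) (ω t)) : ℝ) := by
        rw [he t, sum_inner]
        exact Finset.sum_congr rfl fun j _ => by
          rw [real_inner_smul_left, ← cross3_triple]
      rw [hee]
      exact hsum
    have h2 : HasDerivAt (fun s => 1 / 2 * (inner ℝ (ω s) (ω s) : ℝ))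
        ((inner ℝ (ω t) (ω' t) : ℝ)) t := by
      have := (HasDerivAt.inner ℝ (hω t) (hω t)).const_mul (1/2 : ℝ)
      convert this using 1
      · rfl
      · rfl
      rw [real_inner_comm (ω' t) (ω t)]; ring
    have h3 : HasDerivAt (fun s => kV * (inner ℝ (e s) (ω s) : ℝ))
        (kV * ((inner ℝ (e t) (ω' t) : ℝ) + (inner ℝ (E' t) (ω t) : ℝ))) t :=
      (HasDerivAt.inner ℝ (hE t) (hω t)).const_mul kV
    exact (h1.add h2).add h3
  constructor
  · exact fun t => (hVd t).differentiableAt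
  intro t
  rw [(hVd t).deriv]
  have hip : ∀ x y : EuclideanSpace ℝ (Fin 3), (inner ℝ x y : ℝ) ≤ ‖x‖ * ‖y‖ :=
    fun x y => real_inner_le_norm x y
  have hωω' : (inner ℝ (ω t) (ω' t) : ℝ)
      = -(kω * ‖ω t‖^2) - (inner ℝ (ω t) (e t) : ℝ) + (inner ℝ (ω t) (h t) : ℝ) := by
    simp only [hω'def]
    rw [inner_add_right, inner_sub_right, inner_neg_right, real_inner_smul_right,
      real_inner_self_eq_norm_sq]
  have heω' : (inner ℝ (e t) (ω' t) : ℝ)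
      = -(kω * (inner ℝ (e t) (ω t) : ℝ)) - ‖e t‖^2 + (inner ℝ (e t) (h t) : ℝ) := by
    simp only [hω'def]
    rw [inner_add_right, inner_sub_right, inner_neg_right, real_inner_smul_right,
      real_inner_self_eq_norm_sq]
  have hsym : (inner ℝ (e t) (ω t) : ℝ) = (inner ℝ (ω t) (e t) : ℝ) := real_inner_comm _ _
  -- bound on ⟪E', ω⟫
  have hE'bound : (inner ℝ (E' t) (ω t) : ℝ) ≤ (∑ j, k j) * ‖ω t‖^2 := by
    rw [hE'def]
    simp only [sum_inner, real_inner_smul_left]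
    rw [Finset.sum_mul]
    refine Finset.sum_le_sum fun j _ => ?_
    have hb1 : ‖cross3 (a j) (cross3 (b j t) (ω t))‖ ≤ ‖ω t‖ := by
      have hA := cross3_norm_le (a j) (cross3 (b j t) (ω t))
      rw [ha j, one_mul] at hA
      have hB := cross3_norm_le (b j t) (ω t)
      rw [hbunit j t, one_mul] at hB
      exact hA.trans hB
    have := hip (cross3 (a j) (cross3 (b j t) (ω t))) (ω t)
    have h2 : (inner ℝ (cross3 (a j) (cross3 (b j t) (ω t))) (ω t) : ℝ) ≤ ‖ω t‖^2 := by
      nlinarith [norm_nonneg (ω t)]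
    have := (hk j).le
    nlinarith
  -- bound on -⟪e, ω⟫
  have hneg : -(inner ℝ (e t) (ω t) : ℝ) ≤ ‖e t‖ * ‖ω t‖ := by
    have := hip (-(e t)) (ω t)
    simpa [inner_neg_left] using this
  have hωh := hip (ω t) (h t)
  have heh := hip (e t) (h t)
  have hkVnegkω : kV * kω * (-(inner ℝ (e t) (ω t) : ℝ)) ≤ kV * kω * (‖e t‖ * ‖ω t‖) :=
    mul_le_mul_of_nonneg_left hneg (by positivity)
  have hkVeh : kV * (inner ℝ (e t) (h t) : ℝ) ≤ kV * (‖e t‖ * ‖h t‖) :=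
    mul_le_mul_of_nonneg_left heh hkV
  have hkVE' : kV * (inner ℝ (E' t) (ω t) : ℝ) ≤ kV * ((∑ j, k j) * ‖ω t‖^2) :=
    mul_le_mul_of_nonneg_left hE'bound hkV
  rw [hsym] at hkVnegkω heω'
  rw [hωω', heω', hsym]
  have hexp : kV * (-(kω * (inner ℝ (ω t) (e t) : ℝ)) - ‖e t‖^2 + (inner ℝ (e t) (h t) : ℝ)
        + (inner ℝ (E' t) (ω t) : ℝ))
      = kV * kω * (-(inner ℝ (ω t) (e t) : ℝ)) - kV * ‖e t‖^2
        + kV * (inner ℝ (e t) (h t) : ℝ) + kV * (inner ℝ (E' t) (ω t) : ℝ) := by ring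
  rw [hexp]
  have hrhs : -(kω - kV * ∑ j, k j) * ‖ω t‖ ^ 2 - kV * ‖e t‖ ^ 2
        + kV * kω * ‖e t‖ * ‖ω t‖ + (‖ω t‖ + kV * ‖e t‖) * ‖h t‖
      = -(kω * ‖ω t‖^2) + kV * ((∑ j, k j) * ‖ω t‖^2) - kV * ‖e t‖^2
        + kV * kω * (‖e t‖ * ‖ω t‖) + ‖ω t‖ * ‖h t‖ + kV * (‖e t‖ * ‖h t‖) := by ring
  rw [hrhs]
  linarith [hkVnegkω, hkVeh, hkVE', hωh]
end
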